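/- Let ω be complex roots of λ⁴ - λ³ - λ² - λ - 1 = 0. Then this polynomial has exactly two real roots α > 0 and β < 0, with 1.9 < α < 2 and -1 < β < 0, and its two remaining roots are complex conjugates of each other with modulus less than 1. -/

import Mathlib

set_option maxHeartbeats 1000000 in
theorem stmt_18 : ∃ α β : ℝ,
    0 < α ∧ 1.9 < α ∧ α < 2 ∧ -1 < β ∧ β < 0 ∧
    {r : ℝ | r ^ 4 - r ^ 3 - r ^ 2 - r - 1 = 0} = {α, β} ∧
    ∃ γ : ℂ, γ.im ≠ 0 ∧ ‖γ‖ < 1 ∧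
      ∀ z : ℂ, z ^ 4 - z ^ 3 - z ^ 2 - z - 1 =
        (z - (α : ℂ)) * (z - (β : ℂ)) * (z - γ) * (z - (starRingEnd ℂ) γ) := by
  have hcont : ContinuousOn (fun x : ℝ => x^4 - x^3 - x^2 - x - 1) (Set.Icc (1.9:ℝ) 2) :=
    (by continuity : Continuous fun x : ℝ => x^4 - x^3 - x^2 - x - 1).continuousOn
  have hcont2 : ContinuousOn (fun x : ℝ => x^4 - x^3 - x^2 - x - 1) (Set.Icc (-0.8:ℝ) (-0.6)) :=
    (by continuity : Continuous fun x : ℝ => x^4 - x^3 - x^2 - x - 1).continuousOn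
  have h1 : (0:ℝ) ∈ Set.Ioo ((1.9:ℝ)^4 - 1.9^3 - 1.9^2 - 1.9 - 1) ((2:ℝ)^4 - 2^3 - 2^2 - 2 - 1) := by
    norm_num
  obtain ⟨α, hαmem, hα0⟩ := intermediate_value_Ioo (by norm_num : (1.9:ℝ) ≤ 2) hcont h1
  have h2 : (0:ℝ) ∈ Set.Ioo ((-0.6:ℝ)^4 - (-0.6)^3 - (-0.6)^2 - (-0.6) - 1)
      ((-0.8:ℝ)^4 - (-0.8)^3 - (-0.8)^2 - (-0.8) - 1) := by norm_num
  obtain ⟨β, hβmem, hβ0⟩ := intermediate_value_Ioo' (by norm_num : (-0.8:ℝ) ≤ -0.6) hcont2 h2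
  obtain ⟨ha1, ha2⟩ := hαmem
  obtain ⟨hb1, hb2⟩ := hβmem
  have hα : α^4 - α^3 - α^2 - α - 1 = 0 := hα0
  have hβ : β^4 - β^3 - β^2 - β - 1 = 0 := hβ0
  have hαβ : α ≠ β := by nlinarith
  -- remainder coefficients vanish
  have hC : (α+β)^3 - (α+β)^2 - 2*(α*β)*(α+β) - (α+β) + (α*β) - 1 = 0 := by
    have h1 : ((α+β)^3 - (α+β)^2 - 2*(α*β)*(α+β) - (α+β) + (α*β) - 1) * (α - β) = 0 := by
      linear_combination hα - hβ
    rcases mul_eq_zero.mp h1 with h | h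
    · exact h
    · exact absurd (sub_eq_zero.mp h) hαβ
  have hD : -1 - (α*β) * ((α+β)^2 - (α+β) - (α*β) - 1) = 0 := by
    linear_combination hα - α * hC
  -- numeric bounds
  have hp1 : α*β < -1 := by nlinarith
  have hp2 : -1.6 < α*β := by nlinarith
  have hpc : (α*β) * ((α+β)^2 - (α+β) - (α*β) - 1) = -1 := by linarith
  have hcpos : 0 < (α+β)^2 - (α+β) - (α*β) - 1 := by nlinarith
  have hc1 : (α+β)^2 - (α+β) - (α*β) - 1 < 1 := by nlinarith
  have hbl : (0.1:ℝ) < (α+β) - 1 := by nlinarith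
  have hbu : (α+β) - 1 < 0.4 := by nlinarith
  have hdisc : ((α+β)-1)^2 < 4 * ((α+β)^2 - (α+β) - (α*β) - 1) := by nlinarith
  have ht2 : Real.sqrt (4*((α+β)^2 - (α+β) - (α*β) - 1) - ((α+β)-1)^2) ^ 2
      = 4*((α+β)^2 - (α+β) - (α*β) - 1) - ((α+β)-1)^2 := Real.sq_sqrt (by linarith)
  set t : ℝ := Real.sqrt (4*((α+β)^2 - (α+β) - (α*β) - 1) - ((α+β)-1)^2) with htdef
  have htpos : 0 < t := Real.sqrt_pos.mpr (by linarith)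
  refine ⟨α, β, by linarith, ha1, ha2, by linarith, by linarith, ?_, ?_⟩
  · -- root set
    ext r
    simp only [Set.mem_setOf_eq, Set.mem_insert_iff, Set.mem_singleton_iff]
    constructor
    · intro hr
      have key : (r - α) * (r - β) * (r^2 + ((α+β)-1)*r + ((α+β)^2 - (α+β) - (α*β) - 1)) = 0 := by
        linear_combination hr - r * hC - hD
      have hquad : 0 < r^2 + ((α+β)-1)*r + ((α+β)^2 - (α+β) - (α*β) - 1) := by
        nlinarith [sq_nonneg (r + ((α+β)-1)/2)]
      rcases mul_eq_zero.mp key with h | h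
      · rcases mul_eq_zero.mp h with h | h
        · left; linarith [sub_eq_zero.mp h]
        · right; linarith [sub_eq_zero.mp h]
      · linarith
    · rintro (rfl | rfl)
      · exact hα
      · exact hβ
  · -- complex roots
    refine ⟨⟨-((α+β)-1)/2, t/2⟩, by simpa using htpos.ne', ?_, ?_⟩
    · have hns : Complex.normSq ⟨-((α+β)-1)/2, t/2⟩ = (α+β)^2 - (α+β) - (α*β) - 1 := by
        simp only [Complex.normSq_mk]; nlinarith [ht2]
      have habs : ‖(⟨-((α+β)-1)/2, t/2⟩ : ℂ)‖ ^ 2 = (α+β)^2 - (α+β) - (α*β) - 1 := by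
        rw [Complex.sq_norm, hns]
      nlinarith [norm_nonneg (⟨-((α+β)-1)/2, t/2⟩ : ℂ), habs]
    · intro z
      have hsum : (⟨-((α+β)-1)/2, t/2⟩ : ℂ) + (starRingEnd ℂ) ⟨-((α+β)-1)/2, t/2⟩
          = -(((α:ℂ)+β) - 1) := by
        rw [Complex.add_conj]
        have : (⟨-((α+β)-1)/2, t/2⟩ : ℂ).re = -((α+β)-1)/2 := rfl
        rw [this]; push_cast; ring
      have hprod : (⟨-((α+β)-1)/2, t/2⟩ : ℂ) * (starRingEnd ℂ) ⟨-((α+β)-1)/2, t/2⟩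
          = ((α:ℂ)+β)^2 - ((α:ℂ)+β) - ((α:ℂ)*β) - 1 := by
        rw [Complex.mul_conj]
        have hns : Complex.normSq ⟨-((α+β)-1)/2, t/2⟩ = (α+β)^2 - (α+β) - (α*β) - 1 := by
          simp only [Complex.normSq_mk]; nlinarith [ht2]
        rw [hns]; push_cast; ring
      have hCc : ((α:ℂ)+β)^3 - ((α:ℂ)+β)^2 - 2*((α:ℂ)*β)*((α:ℂ)+β) - ((α:ℂ)+β) + ((α:ℂ)*β) - 1
          = 0 := by exact_mod_cast congrArg (Complex.ofReal) hC
      have hDc : -1 - ((α:ℂ)*β) * (((α:ℂ)+β)^2 - ((α:ℂ)+β) - ((α:ℂ)*β) - 1) = 0 := by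
        exact_mod_cast congrArg (Complex.ofReal) hD
      linear_combination (z - α) * (z - β) * (z * hsum - hprod) + z * hCc + hDc
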